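/- Let V and W be finite-dimensional real vector spaces and φ : V → W a linear map. If L ⊆ 𝕋V = V × V* is a Lagrangian subspace with respect to the pairing ⟨(u,ξ),(v,η)⟩ = ξ(v) + η(u), then the forward image φ_!(L) := {(φ(u), η) : u ∈ V, η ∈ W*, (u, η ∘ φ) ∈ L} is a Lagrangian subspace of 𝕋W = W × W*. -/

import Mathlib

open Module

variable {V W : Type*} [AddCommGroup V] [Module ℝ V] [AddCommGroup W] [Module ℝ W]

/-- The canonical symmetric pairing on the generalized tangent space `𝕋V = V × V*`:
`⟨(u,ξ),(v,η)⟩ = ξ(v) + η(u)`. -/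
noncomputable def gpair : (V × Module.Dual ℝ V) →ₗ[ℝ] (V × Module.Dual ℝ V) →ₗ[ℝ] ℝ :=
  LinearMap.mk₂ ℝ (fun a b => a.2 b.1 + b.2 a.1)
    (fun a a' b => by
      simp only [Prod.fst_add, Prod.snd_add, LinearMap.add_apply, map_add]; ring)
    (fun r a b => by
      simp only [Prod.smul_fst, Prod.smul_snd, LinearMap.smul_apply, map_smul,
        smul_eq_mul]; ring)
    (fun a b b' => by
      simp only [Prod.fst_add, Prod.snd_add, LinearMap.add_apply, map_add]; ring)
    (fun r a b => by
      simp only [Prod.smul_fst, Prod.smul_snd, LinearMap.smul_apply, map_smul,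
        smul_eq_mul]; ring)

/-- Orthogonal complement with respect to the canonical pairing on `𝕋V`. -/
noncomputable def gperp (S : Submodule ℝ (V × Module.Dual ℝ V)) :
    Submodule ℝ (V × Module.Dual ℝ V) where
  carrier := {a | ∀ b ∈ S, gpair a b = 0}
  add_mem' := by
    intro a b ha hb c hc
    rw [map_add, LinearMap.add_apply, ha c hc, hb c hc, add_zero]
  zero_mem' := by
    intro c hc
    rw [map_zero, LinearMap.zero_apply]
  smul_mem' := by
    intro r a ha c hc
    rw [map_smul, LinearMap.smul_apply, ha c hc, smul_zero]

/-- A subspace of `𝕋V` is Lagrangian if it equals its own orthogonal complement. -/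
def IsLagrangian (L : Submodule ℝ (V × Module.Dual ℝ V)) : Prop :=
  gperp L = L

/-- A linear map `π : V* → V` is skew-symmetric. -/
def IsSkew (π : Module.Dual ℝ V →ₗ[ℝ] V) : Prop :=
  ∀ ξ η : Module.Dual ℝ V, η (π ξ) = -(ξ (π η))

/-- The tangent product `L ⋆ R = {(u, ξ+η) : (u,ξ) ∈ L, (u,η) ∈ R}`. -/
def tanProd (L R : Submodule ℝ (V × Module.Dual ℝ V)) :
    Submodule ℝ (V × Module.Dual ℝ V) where
  carrier := {a | ∃ ξ η : Module.Dual ℝ V, (a.1, ξ) ∈ L ∧ (a.1, η) ∈ R ∧ a.2 = ξ + η}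
  add_mem' := by
    rintro a b ⟨ξ, η, h1, h2, h3⟩ ⟨ξ', η', h1', h2', h3'⟩
    refine ⟨ξ + ξ', η + η', ?_, ?_, ?_⟩
    · simpa [Prod.fst_add] using L.add_mem h1 h1'
    · simpa [Prod.fst_add] using R.add_mem h2 h2'
    · simp only [Prod.snd_add, h3, h3']; abel
  zero_mem' := ⟨0, 0, by simpa using (show ((0 : V), (0 : Module.Dual ℝ V)) ∈ L from L.zero_mem), by simpa using (show ((0 : V), (0 : Module.Dual ℝ V)) ∈ R from R.zero_mem), by simp⟩
  smul_mem' := by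
    rintro r a ⟨ξ, η, h1, h2, h3⟩
    refine ⟨r • ξ, r • η, ?_, ?_, ?_⟩
    · simpa [Prod.smul_fst] using L.smul_mem r h1
    · simpa [Prod.smul_fst] using R.smul_mem r h2
    · simp only [Prod.smul_snd, h3, smul_add]

/-- The cotangent product `L ⊛ R = {(u+v, ξ) : (u,ξ) ∈ L, (v,ξ) ∈ R}`. -/
def cotProd (L R : Submodule ℝ (V × Module.Dual ℝ V)) :
    Submodule ℝ (V × Module.Dual ℝ V) where
  carrier := {a | ∃ u v : V, (u, a.2) ∈ L ∧ (v, a.2) ∈ R ∧ a.1 = u + v}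
  add_mem' := by
    rintro a b ⟨u, v, h1, h2, h3⟩ ⟨u', v', h1', h2', h3'⟩
    refine ⟨u + u', v + v', ?_, ?_, ?_⟩
    · simpa [Prod.snd_add] using L.add_mem h1 h1'
    · simpa [Prod.snd_add] using R.add_mem h2 h2'
    · simp only [Prod.fst_add, h3, h3']; abel
  zero_mem' := ⟨0, 0, by simpa using (show ((0 : V), (0 : Module.Dual ℝ V)) ∈ L from L.zero_mem), by simpa using (show ((0 : V), (0 : Module.Dual ℝ V)) ∈ R from R.zero_mem), by simp⟩
  smul_mem' := by
    rintro r a ⟨u, v, h1, h2, h3⟩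
    refine ⟨r • u, r • v, ?_, ?_, ?_⟩
    · simpa [Prod.smul_snd] using L.smul_mem r h1
    · simpa [Prod.smul_snd] using R.smul_mem r h2
    · simp only [Prod.smul_fst, h3, smul_add]

/-- The backward image `φ^!(L) = {(u, η ∘ φ) : (φ(u), η) ∈ L}`. -/
def back (φ : V →ₗ[ℝ] W) (L : Submodule ℝ (W × Module.Dual ℝ W)) :
    Submodule ℝ (V × Module.Dual ℝ V) where
  carrier := {a | ∃ η : Module.Dual ℝ W, (φ a.1, η) ∈ L ∧ a.2 = η.comp φ}
  add_mem' := by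
    rintro a b ⟨η, h1, h2⟩ ⟨η', h1', h2'⟩
    refine ⟨η + η', ?_, ?_⟩
    · simpa [Prod.fst_add, map_add] using L.add_mem h1 h1'
    · simp only [Prod.snd_add, h2, h2', LinearMap.add_comp]
  zero_mem' := ⟨0, by simpa using (show ((0 : W), (0 : Module.Dual ℝ W)) ∈ L from L.zero_mem), by simp⟩
  smul_mem' := by
    rintro r a ⟨η, h1, h2⟩
    refine ⟨r • η, ?_, ?_⟩
    · simpa [Prod.smul_fst, map_smul] using L.smul_mem r h1
    · simp only [Prod.smul_snd, h2, LinearMap.smul_comp]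

/-- The forward image `φ_!(L) = {(φ(u), η) : (u, η ∘ φ) ∈ L}`. -/
def fwd (φ : V →ₗ[ℝ] W) (L : Submodule ℝ (V × Module.Dual ℝ V)) :
    Submodule ℝ (W × Module.Dual ℝ W) where
  carrier := {b | ∃ u : V, φ u = b.1 ∧ (u, b.2.comp φ) ∈ L}
  add_mem' := by
    rintro a b ⟨u, h1, h2⟩ ⟨u', h1', h2'⟩
    refine ⟨u + u', ?_, ?_⟩
    · simp only [map_add, h1, h1', Prod.fst_add]
    · have := L.add_mem h2 h2'
      simpa [Prod.snd_add, LinearMap.add_comp] using this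
  zero_mem' := ⟨0, by simp, by simpa using (show ((0 : V), (0 : Module.Dual ℝ V)) ∈ L from L.zero_mem)⟩
  smul_mem' := by
    rintro r a ⟨u, h1, h2⟩
    refine ⟨r • u, ?_, ?_⟩
    · simp only [map_smul, h1, Prod.smul_fst]
    · have := L.smul_mem r h2
      simpa [Prod.smul_snd, LinearMap.smul_comp] using this

/-- The graph `Gr(π) = {(π(ξ), ξ) : ξ ∈ V*}` of a map `π : V* → V`. -/
def gr (π : Module.Dual ℝ V →ₗ[ℝ] V) : Submodule ℝ (V × Module.Dual ℝ V) where
  carrier := {a | π a.2 = a.1}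
  add_mem' := by
    intro a b ha hb
    simp only [Set.mem_setOf_eq, Prod.fst_add, Prod.snd_add, map_add] at *
    rw [ha, hb]
  zero_mem' := by simp
  smul_mem' := by
    intro r a ha
    simp only [Set.mem_setOf_eq, Prod.smul_fst, Prod.smul_snd, map_smul] at *
    rw [ha]

theorem stmt4 [FiniteDimensional ℝ V] [FiniteDimensional ℝ W]
    (φ : V →ₗ[ℝ] W) (L : Submodule ℝ (V × Module.Dual ℝ V))
    (hL : IsLagrangian L) :
    IsLagrangian (fwd φ L) := by
  unfold IsLagrangian at hL ⊢
  apply le_antisymm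
  · -- hard direction: gperp (fwd φ L) ≤ fwd φ L
    rintro ⟨w, ζ⟩ ha
    have ha' : ∀ b ∈ fwd φ L, ζ b.1 + b.2 w = 0 := by
      intro b hb
      have := ha b hb
      simpa [gpair, LinearMap.mk₂_apply] using this
    -- Step A : w ∈ range φ
    have hw : w ∈ LinearMap.range φ := by
      by_contra hnw
      obtain ⟨η, hη1, hη2⟩ := Submodule.exists_dual_map_eq_bot_of_notMem hnw inferInstance
      have hηφ : η.comp φ = 0 := by
        ext v
        have : η (φ v) ∈ (LinearMap.range φ).map η := ⟨φ v, ⟨v, rfl⟩, rfl⟩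
        rw [hη2] at this
        simpa using this
      have hmem : ((0 : W), η) ∈ fwd φ L := ⟨0, by simp, by simp [hηφ]; exact L.zero_mem⟩
      have := ha' _ hmem
      simp at this
      exact hη1 this
    obtain ⟨u₀, hu₀⟩ := hw
    -- the functional F on L
    set F : L →ₗ[ℝ] ℝ :=
      { toFun := fun x => ζ (φ x.val.1) + x.val.2 u₀
        map_add' := by intro x y; simp; ring
        map_smul' := by intro r x; simp; ring }
    -- S : L → Dual (ker φ)
    set S : L →ₗ[ℝ] Module.Dual ℝ (LinearMap.ker φ) :=
      { toFun := fun x => (x.val.2).comp (LinearMap.ker φ).subtype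
        map_add' := by intro x y; rfl
        map_smul' := by intro r x; rfl }
    have h2 := LinearMap.range_dualMap_eq_dualAnnihilator_ker (K := ℝ) (V₁ := L) (V₂ := Module.Dual ℝ (LinearMap.ker φ)) S
    have hFmem : -F ∈ (LinearMap.ker S).dualAnnihilator := by
      rw [Submodule.mem_dualAnnihilator]
      intro x hx
      have hx2 : x.val.2 ∈ (LinearMap.ker φ).dualAnnihilator := by
        rw [Submodule.mem_dualAnnihilator]
        intro v hv
        have : S x = 0 := hx
        have := congrFun (congrArg DFunLike.coe this) ⟨v, hv⟩
        exact this
      rw [← LinearMap.range_dualMap_eq_dualAnnihilator_ker] at hx2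
      obtain ⟨η, hη⟩ := hx2
      have hfwd : (φ x.val.1, η) ∈ fwd φ L := by
        refine ⟨x.val.1, rfl, ?_⟩
        have : η.comp φ = x.val.2 := hη
        rw [this]
        exact x.prop
      have h0 := ha' _ hfwd
      have hηw : η w = η (φ u₀) := by rw [hu₀]
      have : ζ (φ x.val.1) + x.val.2 u₀ = 0 := by
        have hx2u : x.val.2 u₀ = η (φ u₀) := by rw [← hη]; rfl
        rw [hx2u, ← hηw]
        simpa using h0
      simp only [LinearMap.neg_apply, F, LinearMap.coe_mk, AddHom.coe_mk]
      linarith [this]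
    have hFmem' : -F ∈ LinearMap.range S.dualMap := by
      rw [h2]; exact hFmem
    obtain ⟨g, hg⟩ := hFmem'
    obtain ⟨k, hk⟩ := (Module.evalEquiv ℝ (LinearMap.ker φ)).surjective g
    have hkF : ∀ x : L, x.val.2 k.val = -(F x) := by
      intro x
      have := congrFun (congrArg DFunLike.coe hg) x
      rw [← hk] at this
      simpa [S, Module.evalEquiv, LinearMap.dualMap_apply] using this
    refine ⟨u₀ + k.val, ?_, ?_⟩
    · have hk0 : φ k.val = 0 := k.prop
      simp [map_add, hu₀, hk0]
    · rw [← hL]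
      intro b hb
      have := hkF ⟨b, hb⟩
      simp only [gpair, LinearMap.mk₂_apply]
      simp only [F, LinearMap.coe_mk, AddHom.coe_mk] at this
      simp only [LinearMap.comp_apply, map_add, this]
      ring
  · -- easy direction: fwd φ L ≤ gperp (fwd φ L)
    rintro a ⟨u, hu1, hu2⟩ b ⟨v, hv1, hv2⟩
    have h := hL ▸ hu2
    have := h _ hv2
    simp only [gpair, LinearMap.mk₂_apply] at this ⊢
    simp only [LinearMap.comp_apply] at this
    rw [← hu1, ← hv1]
    linarith [this]
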